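/- arXiv:1502.04511 — 10 statements merged into one kernel-verified Lean document; each statement's English description precedes it below -/
import Mathlib

section
/- If G=(V,E) is a finite graph and x : V → {0,1,...,L} is any initial load vector, then there exists an integer-valued output y : V → {0,1,...,L} and a flow f : E → ℤ such that y(v) = x(v) + Σ_{(u,v)∈E} f(u,v) for all v, and |y(u) − y(v)| ≤ 1 for every edge {u,v}. -/
private lemma step_lemma {V : Type*} [Fintype V] [DecidableEq V] (G : SimpleGraph V)
    (L : ℕ) (x : V → ℕ) (y : V → ℕ) (f : V → V → ℤ)
    (hanti : ∀ u v, f u v = - f v u) (hsupp : ∀ u v, ¬ G.Adj u v → f u v = 0)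
    (hflow : ∀ v, (y v : ℤ) = (x v : ℤ) + ∑ u, f u v) (hL : ∀ v, y v ≤ L)
    (u v : V) (huv : G.Adj u v) (hgap : y v + 2 ≤ y u) :
    ∃ (y' : V → ℕ) (f' : V → V → ℤ),
      (∀ a b, f' a b = - f' b a) ∧ (∀ a b, ¬ G.Adj a b → f' a b = 0) ∧
      (∀ w, (y' w : ℤ) = (x w : ℤ) + ∑ a, f' a w) ∧ (∀ w, y' w ≤ L) ∧
      ∑ w, (y' w)^2 < ∑ w, (y w)^2 := by
  have hne : u ≠ v := huv.ne
  set g : V → V → ℤ := fun a b =>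
    if a = u ∧ b = v then 1 else if a = v ∧ b = u then -1 else 0 with hg
  have hsum : ∀ w, ∑ a, g a w
      = (if w = v then (1:ℤ) else 0) + (if w = u then (-1:ℤ) else 0) := by
    intro w
    have hsplit : ∀ a, g a w = (if a = u then (if w = v then (1:ℤ) else 0) else 0)
        + (if a = v then (if w = u then (-1:ℤ) else 0) else 0) := by
      intro a
      simp only [hg]
      by_cases h1 : a = u <;> by_cases h2 : a = v <;>
        by_cases h3 : w = u <;> by_cases h4 : w = v <;>
        first
          | exact absurd (h1.symm.trans h2) hne
          | exact absurd (h3.symm.trans h4) hne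
          | simp [h1, h2, h3, h4, hne, hne.symm]
    rw [Finset.sum_congr rfl (fun a _ => hsplit a), Finset.sum_add_distrib,
      Finset.sum_ite_eq' Finset.univ u, Finset.sum_ite_eq' Finset.univ v]
    simp
  refine ⟨Function.update (Function.update y u (y u - 1)) v (y v + 1),
    fun a b => f a b + g a b, ?_, ?_, ?_, ?_, ?_⟩
  · intro a b
    have hga : g a b = - g b a := by
      simp only [hg]
      by_cases h1 : a = u ∧ b = v
      · obtain ⟨rfl, rfl⟩ := h1
        simp [hne, hne.symm]
      · by_cases h2 : a = v ∧ b = u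
        · obtain ⟨rfl, rfl⟩ := h2
          simp [hne, hne.symm]
        · have h3 : ¬ (b = u ∧ a = v) := fun ⟨hb, ha⟩ => h2 ⟨ha, hb⟩
          have h4 : ¬ (b = v ∧ a = u) := fun ⟨hb, ha⟩ => h1 ⟨ha, hb⟩
          simp [h1, h2, h3, h4]
    show f a b + g a b = - (f b a + g b a)
    rw [hanti a b, hga]; ring
  · intro a b hab
    have hga : g a b = 0 := by
      simp only [hg]
      have h1 : ¬ (a = u ∧ b = v) := by rintro ⟨rfl, rfl⟩; exact hab huv
      have h2 : ¬ (a = v ∧ b = u) := by rintro ⟨rfl, rfl⟩; exact hab huv.symm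
      simp [h1, h2]
    show f a b + g a b = 0
    rw [hsupp a b hab, hga]; ring
  · intro w
    show (_ : ℤ) = (x w : ℤ) + ∑ a, (f a w + g a w)
    rw [Finset.sum_add_distrib, hsum w]
    by_cases hwv : w = v
    · have hwu : w ≠ u := by rw [hwv]; exact fun h => hne h.symm
      rw [if_pos hwv, if_neg hwu, hwv, Function.update_self]
      have := hflow v
      push_cast
      linarith
    · by_cases hwu : w = u
      · rw [if_neg hwv, if_pos hwu, hwu,
          Function.update_of_ne hne, Function.update_self]
        have h1 : 1 ≤ y u := by omega
        rw [Nat.cast_sub h1]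
        have := hflow u
        push_cast at this ⊢
        linarith
      · rw [if_neg hwv, if_neg hwu, Function.update_of_ne hwv,
          Function.update_of_ne hwu]
        have := hflow w
        linarith
  · intro w
    by_cases hwv : w = v
    · rw [hwv, Function.update_self]
      have := hL u; omega
    · by_cases hwu : w = u
      · rw [hwu, Function.update_of_ne hne, Function.update_self]
        have := hL u; omega
      · rw [Function.update_of_ne hwv, Function.update_of_ne hwu]
        exact hL w
  · set y' := Function.update (Function.update y u (y u - 1)) v (y v + 1) with hy'
    have hy'v : y' v = y v + 1 := by rw [hy', Function.update_self]
    have hy'u : y' u = y u - 1 := by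
      rw [hy', Function.update_of_ne hne, Function.update_self]
    have hy'w : ∀ w, w ≠ u → w ≠ v → y' w = y w := by
      intro w hwu hwv
      rw [hy', Function.update_of_ne hwv, Function.update_of_ne hwu]
    have key : (∑ w, ((y' w : ℤ))^2) < ∑ w, ((y w : ℤ))^2 := by
      have hdiff : ∑ w, (((y' w : ℤ))^2 - ((y w : ℤ))^2)
          = (((y' u : ℤ))^2 - ((y u : ℤ))^2) + (((y' v : ℤ))^2 - ((y v : ℤ))^2) := by
        exact Finset.sum_eq_add u v hne
          (fun c _ hc => by rw [hy'w c hc.1 hc.2]; ring)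
          (fun h => absurd (Finset.mem_univ u) h)
          (fun h => absurd (Finset.mem_univ v) h)
      have hsub : ∑ w, (((y' w : ℤ))^2 - ((y w : ℤ))^2)
          = (∑ w, ((y' w : ℤ))^2) - ∑ w, ((y w : ℤ))^2 := Finset.sum_sub_distrib _ _
      have hu1 : 1 ≤ y u := by omega
      have hcu : ((y' u : ℤ)) = (y u : ℤ) - 1 := by
        rw [hy'u]; omega
      have hcv : ((y' v : ℤ)) = (y v : ℤ) + 1 := by rw [hy'v]; push_cast; ring
      have hgap' : (y v : ℤ) + 2 ≤ (y u : ℤ) := by exact_mod_cast hgap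
      nlinarith [hsub.symm.trans hdiff]
    have hcast : (((∑ w, (y' w)^2 : ℕ)) : ℤ) < ((∑ w, (y w)^2 : ℕ) : ℤ) := by
      push_cast; exact key
    exact_mod_cast hcast

/-- Existence of a discrete locally optimal load balancing on any finite graph:
there are integer loads `y` bounded by `L` and an antisymmetric integer flow `f`
supported on edges with `y v = x v + Σ_u f u v` and all edges happy. -/
theorem stmt0 {V : Type*} [Fintype V] [DecidableEq V] (G : SimpleGraph V)
    (L : ℕ) (x : V → ℕ) (hx : ∀ v, x v ≤ L) :
    ∃ (y : V → ℕ) (f : V → V → ℤ),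
      (∀ u v, f u v = - f v u) ∧
      (∀ u v, ¬ G.Adj u v → f u v = 0) ∧
      (∀ v, (y v : ℤ) = (x v : ℤ) + ∑ u, f u v) ∧
      (∀ v, y v ≤ L) ∧
      (∀ u v, G.Adj u v → |(y u : ℤ) - (y v : ℤ)| ≤ 1) := by
  classical
  have hex : ∃ n : ℕ, ∃ (y : V → ℕ) (f : V → V → ℤ),
      ((∀ u v, f u v = - f v u) ∧ (∀ u v, ¬ G.Adj u v → f u v = 0) ∧
       (∀ v, (y v : ℤ) = (x v : ℤ) + ∑ u, f u v) ∧ (∀ v, y v ≤ L)) ∧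
      ∑ w, (y w)^2 = n :=
    ⟨_, x, fun _ _ => 0, ⟨fun _ _ => by ring, fun _ _ _ => rfl,
      fun v => by simp, hx⟩, rfl⟩
  obtain ⟨y, f, ⟨hanti, hsupp, hflow, hL⟩, hpot⟩ := Nat.find_spec hex
  refine ⟨y, f, hanti, hsupp, hflow, hL, ?_⟩
  intro u v huv
  by_contra hbad
  rw [not_le] at hbad
  have hcase : y v + 2 ≤ y u ∨ y u + 2 ≤ y v := by
    rcases abs_cases ((y u : ℤ) - (y v : ℤ)) with ⟨h1, _⟩ | ⟨h1, _⟩ <;>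
      [left; right] <;> omega
  rcases hcase with h | h
  · obtain ⟨y', f', ha, hs, hf, hl, hlt⟩ :=
      step_lemma G L x y f hanti hsupp hflow hL u v huv h
    have hle : Nat.find hex ≤ ∑ w, (y' w)^2 :=
      Nat.find_le ⟨y', f', ⟨ha, hs, hf, hl⟩, rfl⟩
    omega
  · obtain ⟨y', f', ha, hs, hf, hl, hlt⟩ :=
      step_lemma G L x y f hanti hsupp hflow hL v u huv.symm h
    have hle : Nat.find hex ≤ ∑ w, (y' w)^2 :=
      Nat.find_le ⟨y', f', ⟨ha, hs, hf, hl⟩, rfl⟩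
    omega
end

section
/- In the centralised balancing process where one always moves the topmost token of an unhappy edge (so a moved token's height y(u) decreases by at least 1 with each move), every individual token is moved at most L times; consequently there exists a locally optimal discrete load balancing in which every token ends within distance L of its original node. -/
section Stmt2Aux

variable {V : Type*} [Fintype V] [DecidableEq V]

/-- Invariant for a single stack at node `v` (head = top token).
Each token `(u, h)` at height `k` (from the bottom) satisfies
`Reachable u v`, `dist u v + k ≤ h` and `h ≤ L`. -/
def okStack (G : SimpleGraph V) (L : ℕ) (v : V) : List (V × ℕ) → Prop
  | [] => True
  | t :: r => (G.Reachable t.1 v ∧ G.dist t.1 v + (r.length + 1) ≤ t.2 ∧ t.2 ≤ L) ∧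
      okStack G L v r

lemma okStack_mem {G : SimpleGraph V} {L : ℕ} {v : V} {l : List (V × ℕ)}
    (h : okStack G L v l) {t : V × ℕ} (ht : t ∈ l) :
    G.Reachable t.1 v ∧ G.dist t.1 v ≤ L := by
  induction l with
  | nil => cases ht
  | cons a r ih =>
    rcases List.mem_cons.mp ht with rfl | ht
    · exact ⟨h.1.1, by have := h.1.2.1; have := h.1.2.2; omega⟩
    · exact ih h.2 ht

lemma okStack_length_le {G : SimpleGraph V} {L : ℕ} {v : V} {l : List (V × ℕ)}
    (h : okStack G L v l) : l.length ≤ L := by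
  cases l with
  | nil => simp
  | cons t r =>
    have h1 := h.1.2.1
    have h2 := h.1.2.2
    simp only [List.length_cons]
    omega

/-- Initial stack at `v` with `n` tokens, heights `n, n-1, …, 1` from top. -/
def initStack (v : V) : ℕ → List (V × ℕ)
  | 0 => []
  | n + 1 => (v, n + 1) :: initStack v n

lemma initStack_length (v : V) (n : ℕ) : (initStack v n).length = n := by
  induction n with
  | zero => rfl
  | succ n ih => simp [initStack, ih]

lemma okStack_initStack (G : SimpleGraph V) {L : ℕ} (v : V) {n : ℕ} (hn : n ≤ L) :
    okStack G L v (initStack v n) := by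
  induction n with
  | zero => trivial
  | succ n ih =>
    refine ⟨⟨by exact SimpleGraph.Reachable.refl v, ?_, hn⟩, ih (by omega)⟩
    rw [SimpleGraph.dist_self, initStack_length]
    omega

lemma countP_initStack (u v : V) (n : ℕ) :
    ((initStack v n).countP (fun t => t.1 == u)) = if v = u then n else 0 := by
  induction n with
  | zero => simp [initStack]
  | succ n ih =>
    rw [initStack, List.countP_cons, ih]
    by_cases h : v = u <;> simp [h]

lemma sum_countP_fst (l : List (V × ℕ)) :
    ∑ u, l.countP (fun t => t.1 == u) = l.length := by
  induction l with
  | nil => simp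
  | cons a r ih =>
    have h1 : ∑ u : V, (if (a.1 == u) = true then 1 else 0) = 1 := by
      simp [beq_iff_eq]
    simp only [List.countP_cons, List.length_cons, Finset.sum_add_distrib, ih, h1]

/-- Decompose a sum over `univ` by pulling out two distinct elements. -/
lemma sum_two {a b : V} (hab : a ≠ b) (f : V → ℕ) :
    ∑ v, f v = (∑ v ∈ (Finset.univ.erase a).erase b, f v) + f a + f b := by
  have hb : b ∈ Finset.univ.erase a := Finset.mem_erase.2 ⟨Ne.symm hab, Finset.mem_univ b⟩
  rw [← Finset.sum_erase_add Finset.univ f (Finset.mem_univ a),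
    ← Finset.sum_erase_add (Finset.univ.erase a) f hb]
  ring

/-- Main lemma: from any state satisfying the invariant, we can finish. -/
lemma key (G : SimpleGraph V) (L : ℕ) (x : V → ℕ) :
    ∀ n (s : V → List (V × ℕ)),
      (∑ v, (s v).length ^ 2) = n →
      (∀ v, okStack G L v (s v)) →
      (∀ u, ∑ v, ((s v).countP (fun t => t.1 == u)) = x u) →
      ∃ (y : V → ℕ) (z : V → V → ℕ),
        (∀ u v, z u v ≠ 0 → G.Reachable u v ∧ G.dist u v ≤ L) ∧
        (∀ u, ∑ v, z u v = x u) ∧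
        (∀ v, ∑ u, z u v = y v) ∧
        (∀ v, y v ≤ L) ∧
        (∀ u v, G.Adj u v → |((y u : ℤ)) - (y v : ℤ)| ≤ 1) := by
  intro n
  induction n using Nat.strong_induction_on with
  | _ n ih =>
    intro s hn hok hcons
    by_cases hhappy : ∀ u v, G.Adj u v → |((s u).length : ℤ) - ((s v).length : ℤ)| ≤ 1
    · -- terminal state
      refine ⟨fun v => (s v).length, fun u v => (s v).countP (fun t => t.1 == u),
        ?_, hcons, fun v => sum_countP_fst (s v), fun v => okStack_length_le (hok v),
        hhappy⟩
      intro u v hz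
      have hpos : 0 < (s v).countP (fun t => t.1 == u) := Nat.pos_of_ne_zero hz
      obtain ⟨t, ht, hpt⟩ := List.countP_pos_iff.mp hpos
      have : t.1 = u := by simpa using hpt
      subst this
      exact okStack_mem (hok v) ht
    · -- there is an unhappy edge; find a, b with Adj a b and (s b).length + 2 ≤ (s a).length
      push_neg at hhappy
      obtain ⟨u, v, hadj, hgt⟩ := hhappy
      obtain ⟨a, b, hab, hlen⟩ :
          ∃ a b, G.Adj a b ∧ (s b).length + 2 ≤ (s a).length := by
        rcases abs_cases (((s u).length : ℤ) - ((s v).length : ℤ)) with ⟨he, _⟩ | ⟨he, _⟩ <;>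
          rw [he] at hgt
        · exact ⟨u, v, hadj, by omega⟩
        · exact ⟨v, u, hadj.symm, by omega⟩
      have hne : a ≠ b := hab.ne
      obtain ⟨t, r, hsa⟩ : ∃ t r, s a = t :: r := by
        cases hsae : s a with
        | nil => rw [hsae] at hlen; simp at hlen
        | cons t r => exact ⟨t, r, rfl⟩
      -- perform the move
      set s' : V → List (V × ℕ) :=
        Function.update (Function.update s a r) b (t :: s b) with hs'
      have hs'a : s' a = r := by
        rw [hs', Function.update_of_ne hne, Function.update_self]
      have hs'b : s' b = t :: s b := by rw [hs', Function.update_self]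
      have hs'o : ∀ w, w ≠ a → w ≠ b → s' w = s w := by
        intro w hwa hwb
        rw [hs', Function.update_of_ne hwb, Function.update_of_ne hwa]
      have hoka := hok a
      rw [hsa] at hoka
      -- key inequalities
      have hlenr : (s b).length + 1 ≤ r.length := by
        rw [hsa] at hlen; simp only [List.length_cons] at hlen; omega
      -- distance bound for moved token
      have hreach : G.Reachable t.1 b := hoka.1.1.trans hab.reachable
      have hdistb : G.dist t.1 b ≤ G.dist t.1 a + 1 := by
        obtain ⟨p, hp⟩ := hoka.1.1.exists_walk_length_eq_dist
        have := SimpleGraph.dist_le (p.concat hab)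
        rwa [SimpleGraph.Walk.length_concat, hp] at this
      -- new invariant
      have hok' : ∀ w, okStack G L w (s' w) := by
        intro w
        by_cases hwa : w = a
        · subst hwa; rw [hs'a]; exact hoka.2
        · by_cases hwb : w = b
          · subst hwb
            rw [hs'b]
            refine ⟨⟨hreach, ?_, hoka.1.2.2⟩, hok w⟩
            have := hoka.1.2.1
            omega
          · rw [hs'o w hwa hwb]; exact hok w
      -- conservation preserved
      have hcons' : ∀ u, ∑ v, ((s' v).countP (fun t => t.1 == u)) = x u := by
        intro u
        rw [← hcons u, sum_two hne (fun v => (s' v).countP (fun t => t.1 == u)),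
          sum_two hne (fun v => (s v).countP (fun t => t.1 == u))]
        have hdiff : ∑ v ∈ (Finset.univ.erase a).erase b,
            ((s' v).countP (fun t => t.1 == u)) =
            ∑ v ∈ (Finset.univ.erase a).erase b,
            ((s v).countP (fun t => t.1 == u)) := by
          refine Finset.sum_congr rfl fun w hw => ?_
          rw [Finset.mem_erase, Finset.mem_erase] at hw
          rw [hs'o w hw.2.1 hw.1]
        rw [hdiff, hs'a, hs'b, hsa, List.countP_cons, List.countP_cons]
        omega
      -- potential decreases
      have hmeas : (∑ v, (s' v).length ^ 2) < n := by
        rw [← hn, sum_two hne (fun v => (s' v).length ^ 2),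
          sum_two hne (fun v => (s v).length ^ 2)]
        have hdiff : ∑ v ∈ (Finset.univ.erase a).erase b, (s' v).length ^ 2 =
            ∑ v ∈ (Finset.univ.erase a).erase b, (s v).length ^ 2 := by
          refine Finset.sum_congr rfl fun w hw => ?_
          rw [Finset.mem_erase, Finset.mem_erase] at hw
          rw [hs'o w hw.2.1 hw.1]
        rw [hdiff]
        have : (s' a).length ^ 2 + (s' b).length ^ 2 <
            (s a).length ^ 2 + (s b).length ^ 2 := by
          rw [hs'a, hs'b, hsa]
          simp only [List.length_cons]
          nlinarith [hlenr]
        omega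
      exact ih _ hmeas s' rfl hok' hcons'

end Stmt2Aux

/-- There exists a locally optimal discrete load balancing in which every token
ends within distance `L` of its original node: there is a transport plan `z`
(`z u v` = number of tokens moved from `u` to `v`) supported on pairs at
distance at most `L`, turning the input loads `x` into happy output loads `y`. -/
theorem stmt2 {V : Type*} [Fintype V] [DecidableEq V] (G : SimpleGraph V)
    (L : ℕ) (x : V → ℕ) (hx : ∀ v, x v ≤ L) :
    ∃ (y : V → ℕ) (z : V → V → ℕ),
      (∀ u v, z u v ≠ 0 → G.Reachable u v ∧ G.dist u v ≤ L) ∧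
      (∀ u, ∑ v, z u v = x u) ∧
      (∀ v, ∑ u, z u v = y v) ∧
      (∀ v, y v ≤ L) ∧
      (∀ u v, G.Adj u v → |(y u : ℤ) - (y v : ℤ)| ≤ 1) := by
  have := key G L x _ (fun v => initStack v (x v)) rfl
    (fun v => okStack_initStack G v (hx v))
    (fun u => by
      simp only [countP_initStack]
      simp)
  exact this
end

section
/- Any deterministic local algorithm (with radius T, i.e., the output load of a node depends only on the inputs within distance T) that solves fractional or discrete load balancing on all paths requires T ≥ ⌊L/2⌋, i.e., T = Ω(L). -/
/-- Lipschitz chain bound: if adjacent outputs differ by at most 1, then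
outputs at distance `b - a` differ by at most `b - a`. -/
private lemma chain_bound {n : ℕ} (y : Fin n → ℝ)
    (h : ∀ v w : Fin n, (v : ℕ) + 1 = (w : ℕ) → |y v - y w| ≤ 1)
    (a : ℕ) :
    ∀ b : ℕ, ∀ hab : a ≤ b, ∀ hb : b < n,
      |y ⟨a, by omega⟩ - y ⟨b, hb⟩| ≤ (b : ℝ) - a := by
  intro b
  induction b with
  | zero =>
      intro hab hb
      have : a = 0 := by omega
      subst this
      simp
  | succ b ih =>
      intro hab hb
      rcases Nat.lt_or_ge a (b + 1) with hlt | hge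
      · have hab' : a ≤ b := by omega
        have hb' : b < n := by omega
        have h1 := ih hab' hb'
        have h2 := h ⟨b, hb'⟩ ⟨b + 1, hb⟩ rfl
        have habs : |y ⟨a, by omega⟩ - y ⟨b + 1, hb⟩| ≤
            |y ⟨a, by omega⟩ - y ⟨b, hb'⟩| + |y ⟨b, hb'⟩ - y ⟨b + 1, hb⟩| :=
          abs_sub_le _ _ _
        have : ((b + 1 : ℕ) : ℝ) - a = ((b : ℕ) : ℝ) - a + 1 := by push_cast; ring
        rw [this]
        linarith
      · have : a = b + 1 := by omega
        subst this
        simp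

/-- Lower bound for local load balancing on paths: any deterministic radius-`T`
local algorithm `A` on paths (the output of a node depends only on the inputs
within distance `T`) that, on every input with loads in `{0,…,L}`, outputs
nonnegative loads preserving the total load and making all edges happy,
must have `T ≥ ⌊L/2⌋`. -/
theorem stmt4 (L T : ℕ)
    (A : (n : ℕ) → (Fin n → ℕ) → (Fin n → ℝ))
    (hloc : ∀ (n : ℕ) (x x' : Fin n → ℕ) (v : Fin n),
      (∀ u : Fin n, |(u : ℤ) - (v : ℤ)| ≤ (T : ℤ) → x u = x' u) → A n x v = A n x' v)
    (hcorrect : ∀ (n : ℕ) (x : Fin n → ℕ), (∀ v, x v ≤ L) →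
      (∀ v, 0 ≤ A n x v) ∧
      (∑ v, A n x v = ∑ v, (x v : ℝ)) ∧
      (∀ v w : Fin n, (v : ℕ) + 1 = (w : ℕ) → |A n x v - A n x w| ≤ 1)) :
    L / 2 ≤ T := by
  by_contra hT
  have hL : 2 * T + 2 ≤ L := by omega
  set n : ℕ := 4 * T + 2 with hn
  -- the all-zero input must produce all-zero output
  have hzero : ∀ v : Fin n, A n (fun _ => 0) v = 0 := by
    obtain ⟨hpos, hsum, _⟩ := hcorrect n (fun _ => 0) (fun v => Nat.zero_le L)
    have hs0 : ∑ v, A n (fun _ => 0) v = 0 := by simpa using hsum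
    intro v
    exact (Finset.sum_eq_zero_iff_of_nonneg (fun i _ => hpos i)).mp hs0 v (Finset.mem_univ v)
  -- the all-L output
  set c := A n (fun _ => L) with hc
  obtain ⟨hcpos, hcsum, hclip⟩ := hcorrect n (fun _ => L) (fun v => le_refl L)
  -- key bound: every output on the all-L input is at most 2T+1
  have key : ∀ v : Fin n, c v ≤ (2 * T + 1 : ℝ) := by
    intro v
    rcases Nat.lt_or_ge (v : ℕ) (2 * T + 1) with hv | hv
    · -- step-down input: L on [0, v+T], 0 afterwards
      set x : Fin n → ℕ := fun u => if (u : ℕ) < (v : ℕ) + T + 1 then L else 0 with hxdef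
      have hxle : ∀ u, x u ≤ L := by
        intro u; simp only [hxdef]; split <;> omega
      obtain ⟨hxpos, hxsum, hxlip⟩ := hcorrect n x hxle
      have hb : (v : ℕ) + 2 * T + 1 < n := by omega
      -- near v the input looks all-L
      have h1 : A n x v = c v := by
        apply hloc
        intro u hu
        rw [abs_le] at hu
        simp only [hxdef]
        rw [if_pos]
        omega
      -- near v + 2T+1 the input looks all-zero
      have h2 : A n x ⟨(v : ℕ) + 2 * T + 1, hb⟩ = 0 := by
        rw [hloc n x (fun _ => 0) ⟨(v : ℕ) + 2 * T + 1, hb⟩ ?_]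
        · exact hzero _
        · intro u hu
          rw [abs_le] at hu
          simp only [hxdef]
          rw [if_neg]
          simp only [Fin.val_mk] at hu
          omega
      have hch := chain_bound (A n x) hxlip (v : ℕ) ((v : ℕ) + 2 * T + 1)
        (by omega) hb
      have hveq : (⟨(v : ℕ), by omega⟩ : Fin n) = v := by
        apply Fin.ext; rfl
      rw [hveq, h1, h2] at hch
      have hcast : (((v : ℕ) + 2 * T + 1 : ℕ) : ℝ) - ((v : ℕ) : ℝ) = (2 * T + 1 : ℝ) := by
        push_cast; ring
      rw [hcast] at hch
      have := abs_le.mp hch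
      linarith [this.1]
    · -- step-up input: 0 on [0, v-T), L afterwards
      set x : Fin n → ℕ := fun u => if (u : ℕ) < (v : ℕ) - T then 0 else L with hxdef
      have hxle : ∀ u, x u ≤ L := by
        intro u; simp only [hxdef]; split <;> omega
      obtain ⟨hxpos, hxsum, hxlip⟩ := hcorrect n x hxle
      have ha : (v : ℕ) - (2 * T + 1) < n := by omega
      -- near v - (2T+1) the input looks all-zero
      have h1 : A n x ⟨(v : ℕ) - (2 * T + 1), ha⟩ = 0 := by
        rw [hloc n x (fun _ => 0) ⟨(v : ℕ) - (2 * T + 1), ha⟩ ?_]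
        · exact hzero _
        · intro u hu
          rw [abs_le] at hu
          simp only [hxdef]
          rw [if_pos]
          simp only [Fin.val_mk] at hu
          omega
      -- near v the input looks all-L
      have h2 : A n x v = c v := by
        apply hloc
        intro u hu
        rw [abs_le] at hu
        simp only [hxdef]
        rw [if_neg]
        omega
      have hch := chain_bound (A n x) hxlip ((v : ℕ) - (2 * T + 1)) (v : ℕ)
        (by omega) v.isLt
      have hveq : (⟨(v : ℕ), v.isLt⟩ : Fin n) = v := by
        apply Fin.ext; rfl
      rw [hveq, h1, h2] at hch
      have hcast : ((v : ℕ) : ℝ) - (((v : ℕ) - (2 * T + 1) : ℕ) : ℝ) = (2 * T + 1 : ℝ) := by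
        rw [Nat.cast_sub (by omega)]
        push_cast; ring
      rw [hcast] at hch
      have := abs_le.mp hch
      linarith [this.1]
  -- the total load forces L ≤ 2T+1
  have hsumle : (n : ℝ) * L ≤ (n : ℝ) * (2 * T + 1) := by
    have h1 : ∑ v : Fin n, c v ≤ ∑ v : Fin n, (2 * T + 1 : ℝ) :=
      Finset.sum_le_sum (fun v _ => key v)
    have h2 : ∑ v : Fin n, (2 * T + 1 : ℝ) = (n : ℝ) * (2 * T + 1) := by
      rw [Finset.sum_const, Finset.card_univ, Fintype.card_fin, nsmul_eq_mul]
    have h3 : ∑ v : Fin n, c v = (n : ℝ) * L := by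
      rw [hcsum]
      simp [Finset.sum_const, mul_comm]
    rw [h3, h2] at h1
    exact h1
  have hnpos : (0 : ℝ) < (n : ℝ) := by
    have : 0 < n := by omega
    exact_mod_cast this
  have hLle : (L : ℝ) ≤ (2 * T + 1 : ℝ) := le_of_mul_le_mul_left hsumle hnpos
  have : L ≤ 2 * T + 1 := by exact_mod_cast hLle
  omega
end

section
/- On a path with a monotone (non-increasing left to right) load configuration, one round of any match-and-balance algorithm preserves monotonicity: if y(i) ≥ y(i+1) for all i, then after balancing along any matching M (where for each matched edge (u,v) with y(u) > y(v), at most (y(u)−y(v))/2 units move from u to v), the new configuration y' satisfies y'(i) ≥ y'(i+1) for all i. -/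
/-- One round of a match-and-balance algorithm preserves monotonicity on a path:
if the loads `y` are non-increasing from left to right, and we balance along a
matching `M` (the edge `{i,i+1}` is represented by its left endpoint `i`),
moving `d i ∈ [0, (y i − y (i+1))/2]` units from `i` to `i+1` for each matched
edge and leaving unmatched nodes untouched, then the new loads `y'` are still
non-increasing. -/
theorem stmt5 (y y' : ℤ → ℝ) (M : Set ℤ) (d : ℤ → ℝ)
    (hmatch : ∀ i ∈ M, i + 1 ∉ M)
    (hmono : ∀ i : ℤ, y (i + 1) ≤ y i)
    (hd : ∀ i ∈ M, 0 ≤ d i ∧ d i ≤ (y i - y (i + 1)) / 2)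
    (hupd : ∀ i ∈ M, y' i = y i - d i ∧ y' (i + 1) = y (i + 1) + d i)
    (hfix : ∀ i : ℤ, i ∉ M → i - 1 ∉ M → y' i = y i) :
    ∀ i : ℤ, y' (i + 1) ≤ y' i := by
  intro i
  by_cases hi : i ∈ M
  · obtain ⟨h1, h2⟩ := hupd i hi
    obtain ⟨hd0, hd2⟩ := hd i hi
    rw [h1, h2]; linarith [hmono i]
  · have hyi' : y i ≤ y' i := by
      by_cases hp : i - 1 ∈ M
      · have h := (hupd (i - 1) hp).2
        have e : i - 1 + 1 = i := by ring
        rw [e] at h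
        rw [h]; linarith [(hd (i - 1) hp).1]
      · rw [hfix i hi hp]
    have hyi1 : y' (i + 1) ≤ y (i + 1) := by
      by_cases hq : i + 1 ∈ M
      · rw [(hupd (i + 1) hq).1]; linarith [(hd (i + 1) hq).1]
      · have hq2 : i + 1 - 1 ∉ M := by simpa using hi
        rw [hfix (i + 1) hq hq2]
    linarith [hmono i]
end

section
/- Any match-and-balance algorithm requires Ω(L²) rounds in the worst case on paths: on the input path with loads L on the left half and 0 on the right half, any valid final configuration forces Ω(L³) total units of work (load times distance moved), while each match-and-balance round performs at most L/2 units of work on a monotone configuration. -/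
private lemma sum_Ico_split (g : ℤ → ℝ) {a b c : ℤ} (hab : a ≤ b) (hbc : b ≤ c) :
    ∑ i ∈ Finset.Ico a c, g i = (∑ i ∈ Finset.Ico a b, g i) + ∑ i ∈ Finset.Ico b c, g i := by
  rw [← Finset.Ico_union_Ico_eq_Ico hab hbc,
    Finset.sum_union (Finset.Ico_disjoint_Ico_consecutive a b c)]

private lemma tele_sum (g : ℤ → ℝ) (a : ℤ) : ∀ b : ℤ, a ≤ b →
    ∑ i ∈ Finset.Ico a b, (g i - g (i + 1)) = g a - g b := by
  refine Int.le_induction ?_ ?_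
  · simp
  · intro b hb ih
    have h2 : Finset.Ico b (b+1) = {b} := by
      ext x; simp [Finset.mem_Ico]; omega
    rw [sum_Ico_split (fun i => g i - g (i+1)) hb (by omega : b ≤ b + 1), ih, h2,
      Finset.sum_singleton]
    ring

/-- Any match-and-balance algorithm needs `Ω(L²)` rounds on paths: starting from
the step input (`L` on nodes `≤ 0`, `0` on nodes `> 0`) on the (bi-infinite)
path, if `R` rounds of match-and-balance steps (balancing along a matching
`M r`, moving `d r i` from `i` to `i+1`, with `|d r i| ≤ |y r i − y r (i+1)|/2`
and directed from the higher to the lower endpoint) produce a configuration in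
which all edges are happy, then `R ≥ c·L²`. -/
theorem stmt7 :
    ∃ c : ℝ, 0 < c ∧ ∃ L₀ : ℕ, ∀ L : ℕ, L₀ ≤ L →
      ∀ (R : ℕ) (y : ℕ → ℤ → ℝ) (M : ℕ → Set ℤ) (d : ℕ → ℤ → ℝ),
        (∀ i : ℤ, y 0 i = if i ≤ 0 then (L : ℝ) else 0) →
        (∀ r < R,
          (∀ i ∈ M r, i + 1 ∉ M r) ∧
          (∀ i ∈ M r, d r i ∈ Set.uIcc 0 ((y r i - y r (i + 1)) / 2)) ∧
          (∀ i ∈ M r, y (r + 1) i = y r i - d r i ∧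
            y (r + 1) (i + 1) = y r (i + 1) + d r i) ∧
          (∀ i : ℤ, i ∉ M r → i - 1 ∉ M r → y (r + 1) i = y r i)) →
        (∀ i : ℤ, |y R i - y R (i + 1)| ≤ 1) →
        c * (L : ℝ) ^ 2 ≤ R := by
  refine ⟨1/1024, by norm_num, 512, fun L hL R y M d h0 hstep hhappy => ?_⟩
  classical
  have hM1 : ∀ r < R, ∀ i ∈ M r, i + 1 ∉ M r := fun r hr => (hstep r hr).1
  have hM2 : ∀ r < R, ∀ i ∈ M r, d r i ∈ Set.uIcc 0 ((y r i - y r (i + 1)) / 2) :=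
    fun r hr => (hstep r hr).2.1
  have hM3 : ∀ r < R, ∀ i ∈ M r, y (r + 1) i = y r i - d r i ∧
      y (r + 1) (i + 1) = y r (i + 1) + d r i := fun r hr => (hstep r hr).2.2.1
  have hM4 : ∀ r < R, ∀ i : ℤ, i ∉ M r → i - 1 ∉ M r → y (r + 1) i = y r i :=
    fun r hr => (hstep r hr).2.2.2
  -- d is zero when the two endpoints are equal
  have hd0 : ∀ r < R, ∀ i ∈ M r, y r i = y r (i + 1) → d r i = 0 := by
    intro r hr i hi he
    have h := hM2 r hr i hi
    rw [he] at h
    simpa using h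
  -- support invariant
  have hsup : ∀ r ≤ R, (∀ i : ℤ, i ≤ -(r : ℤ) → y r i = L) ∧ (∀ i : ℤ, (r : ℤ) < i → y r i = 0) := by
    intro r hr
    induction r with
    | zero =>
      constructor
      · intro i hi; rw [h0, if_pos (by exact_mod_cast hi)]
      · intro i hi; rw [h0, if_neg (by omega)]
    | succ r ih =>
      have hrR : r < R := by omega
      obtain ⟨ihL, ihR⟩ := ih (by omega)
      have key : ∀ i : ℤ, (i ≤ -((r:ℤ)+1) ∨ ((r:ℤ)+1 < i)) → y (r+1) i = y r i := by
        intro i hi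
        by_cases hiM : i ∈ M r
        · have e : y r i = y r (i+1) := by
            rcases hi with hi | hi
            · rw [ihL i (by omega), ihL (i+1) (by omega)]
            · rw [ihR i (by omega), ihR (i+1) (by omega)]
          rw [(hM3 r hrR i hiM).1, hd0 r hrR i hiM e, sub_zero]
        · by_cases hiM' : i - 1 ∈ M r
          · have e : y r (i-1) = y r ((i-1)+1) := by
              have e1 : i - 1 + 1 = i := by ring
              rw [e1]
              rcases hi with hi | hi
              · rw [ihL (i-1) (by omega), ihL i (by omega)]
              · rw [ihR (i-1) (by omega), ihR i (by omega)]
            have h2 := (hM3 r hrR (i-1) hiM').2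
            have e1 : i - 1 + 1 = i := by ring
            rw [e1] at h2
            rw [h2, hd0 r hrR (i-1) hiM' e, add_zero]
          · exact hM4 r hrR i hiM hiM'
      constructor
      · intro i hi
        rw [key i (Or.inl (by push_cast; push_cast at hi; linarith)), ihL i (by push_cast at hi ⊢; linarith)]
      · intro i hi
        rw [key i (Or.inr (by push_cast; push_cast at hi; linarith)), ihR i (by push_cast at hi ⊢; linarith)]
  -- monotonicity
  have hmono : ∀ r ≤ R, ∀ i : ℤ, y r (i + 1) ≤ y r i := by
    intro r hr
    induction r with
    | zero =>
      intro i
      rw [h0, h0]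
      split_ifs with h1 h2 h2
      · exact le_rfl
      · exact absurd (by omega : i ≤ 0) h2
      · positivity
      · exact le_rfl
    | succ r ih =>
      have hrR : r < R := by omega
      have hm := ih (by omega)
      have hd : ∀ i ∈ M r, 0 ≤ d r i ∧ 2 * d r i ≤ y r i - y r (i+1) := by
        intro i hi
        have h2 := hM2 r hrR i hi
        rw [Set.uIcc_of_le (by linarith [hm i])] at h2
        obtain ⟨ha, hb⟩ := h2
        exact ⟨ha, by linarith⟩
      intro i
      by_cases hi : i ∈ M r
      · have h3 := hM3 r hrR i hi
        obtain ⟨hnn, hubd⟩ := hd i hi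
        rw [h3.1, h3.2]
        linarith [hm i]
      · have hi1 : i + 1 - 1 ∉ M r := by
          have e : i + 1 - 1 = i := by ring
          rw [e]; exact hi
        by_cases hi' : i - 1 ∈ M r
        · have h3 := (hM3 r hrR (i-1) hi').2
          have e : i - 1 + 1 = i := by ring
          rw [e] at h3
          have hdn := (hd _ hi').1
          by_cases hj : i + 1 ∈ M r
          · have h4 := (hM3 r hrR (i+1) hj).1
            have hdn2 := (hd _ hj).1
            rw [h3, h4]; linarith [hm i]
          · have h4 := hM4 r hrR (i+1) hj hi1
            rw [h3, h4]; linarith [hm i]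
        · have h3 := hM4 r hrR i hi hi'
          by_cases hj : i + 1 ∈ M r
          · have h4 := (hM3 r hrR (i+1) hj).1
            have hdn2 := (hd _ hj).1
            rw [h3, h4]; linarith [hm i]
          · have h4 := hM4 r hrR (i+1) hj hi1
            rw [h3, h4]; exact hm i
  -- d bounds (for r < R)
  have hdb : ∀ r < R, ∀ i ∈ M r, 0 ≤ d r i ∧ 2 * d r i ≤ y r i - y r (i+1) := by
    intro r hr i hi
    have h2 := hM2 r hr i hi
    rw [Set.uIcc_of_le (by linarith [hmono r (le_of_lt hr) i])] at h2
    obtain ⟨ha, hb⟩ := h2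
    exact ⟨ha, by linarith⟩
  -- antitone
  have hanti : ∀ r ≤ R, ∀ a b : ℤ, a ≤ b → y r b ≤ y r a := by
    intro r hr a
    refine Int.le_induction ?_ ?_
    · exact le_rfl
    · intro b hb ih
      exact le_trans (hmono r hr b) ih
  -- bounds
  have hub : ∀ r ≤ R, ∀ i : ℤ, y r i ≤ L := by
    intro r hr i
    have h1 : y r (min i (-(r:ℤ))) = L := (hsup r hr).1 _ (min_le_right _ _)
    calc y r i ≤ y r (min i (-(r:ℤ))) := hanti r hr _ _ (min_le_left _ _)
    _ = L := h1
  have hlb : ∀ r ≤ R, ∀ i : ℤ, 0 ≤ y r i := by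
    intro r hr i
    have h1 : y r (max i ((r:ℤ)+1)) = 0 := (hsup r hr).2 _ (by omega)
    calc (0:ℝ) = y r (max i ((r:ℤ)+1)) := h1.symm
    _ ≤ y r i := hanti r hr _ _ (le_max_left _ _)
  -- flow along each edge per round
  set f : ℕ → ℤ → ℝ := fun r k => if k ∈ M r then d r k else 0 with hfdef
  set F : ℤ → ℝ := fun k => ∑ r ∈ Finset.range R, f r k with hFdef
  have hf_nn : ∀ r < R, ∀ k : ℤ, 0 ≤ f r k := by
    intro r hr k
    simp only [hfdef]
    split_ifs with h
    · exact (hdb r hr k h).1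
    · exact le_rfl
  have hf_le : ∀ r < R, ∀ k : ℤ, 2 * f r k ≤ y r k - y r (k+1) := by
    intro r hr k
    simp only [hfdef]
    split_ifs with h
    · exact (hdb r hr k h).2
    · simpa using hmono r (le_of_lt hr) k
  -- change formula
  have hchg : ∀ r < R, ∀ i : ℤ, y (r+1) i = y r i + f r (i-1) - f r i := by
    intro r hr i
    by_cases hi : i ∈ M r
    · have hnot : i - 1 ∉ M r := by
        intro h
        have := hM1 r hr (i-1) h
        have e : i - 1 + 1 = i := by ring
        rw [e] at this
        exact this hi
      simp only [hfdef, if_pos hi, if_neg hnot, (hM3 r hr i hi).1]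
      ring
    · by_cases hi' : i - 1 ∈ M r
      · have h3 := (hM3 r hr (i-1) hi').2
        have e : i - 1 + 1 = i := by ring
        rw [e] at h3
        simp only [hfdef, if_neg hi, if_pos hi', h3]
        ring
      · simp only [hfdef, if_neg hi, if_neg hi', hM4 r hr i hi hi']
        ring
  -- flow vanishes at the far boundaries
  have hfB0 : ∀ r < R, f r ((R:ℤ)+1) = 0 := by
    intro r hr
    simp only [hfdef]
    split_ifs with h
    · exact hd0 r hr _ h (by rw [(hsup r (le_of_lt hr)).2 _ (by omega), (hsup r (le_of_lt hr)).2 _ (by omega)])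
    · rfl
  have hfA0 : ∀ r < R, f r (-(R:ℤ)-1) = 0 := by
    intro r hr
    simp only [hfdef]
    split_ifs with h
    · exact hd0 r hr _ h (by rw [(hsup r (le_of_lt hr)).1 _ (by omega), (hsup r (le_of_lt hr)).1 _ (by omega)])
    · rfl
  -- conservation
  have hcons : ∀ k : ℤ, k ≤ (R:ℤ)+1 →
      (∑ i ∈ Finset.Ico (k+1) ((R:ℤ)+2), y R i) - ∑ i ∈ Finset.Ico (k+1) ((R:ℤ)+2), y 0 i = F k := by
    intro k hk
    have key : ∀ s ≤ R, (∑ i ∈ Finset.Ico (k+1) ((R:ℤ)+2), y s i)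
        - ∑ i ∈ Finset.Ico (k+1) ((R:ℤ)+2), y 0 i = ∑ r ∈ Finset.range s, f r k := by
      intro s hs
      induction s with
      | zero => simp
      | succ s ih =>
        have hsR : s < R := by omega
        rw [Finset.sum_range_succ, ← ih (by omega)]
        have e1 : ∀ i : ℤ, y (s+1) i = y s i + ((fun j => f s (j-1)) i - (fun j => f s (j-1)) (i+1)) := by
          intro i
          have e : i + 1 - 1 = i := by ring
          simp only [e]
          rw [hchg s hsR i]
          ring
        have tg := tele_sum (fun j => f s (j-1)) (k+1) ((R:ℤ)+2) (by omega)
        have e2 : (k:ℤ) + 1 - 1 = k := by ring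
        have e3 : (R:ℤ) + 2 - 1 = (R:ℤ) + 1 := by ring
        simp only [e2, e3] at tg
        calc (∑ i ∈ Finset.Ico (k+1) ((R:ℤ)+2), y (s+1) i) - ∑ i ∈ Finset.Ico (k+1) ((R:ℤ)+2), y 0 i
            = ((∑ i ∈ Finset.Ico (k+1) ((R:ℤ)+2), y s i)
              + ∑ i ∈ Finset.Ico (k+1) ((R:ℤ)+2), ((fun j => f s (j-1)) i - (fun j => f s (j-1)) (i+1)))
              - ∑ i ∈ Finset.Ico (k+1) ((R:ℤ)+2), y 0 i := by
              rw [← Finset.sum_add_distrib]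
              congr 1
              exact Finset.sum_congr rfl fun i _ => e1 i
        _ = (∑ i ∈ Finset.Ico (k+1) ((R:ℤ)+2), y s i) - (∑ i ∈ Finset.Ico (k+1) ((R:ℤ)+2), y 0 i) + f s k := by
              rw [tg, hfB0 s hsR]
              ring
    exact key R le_rfl
  -- work upper bound
  have hwork : ∀ a b : ℤ, a ≤ b → ∑ k ∈ Finset.Ico a b, F k ≤ (R:ℝ) * ((L:ℝ)/2) := by
    intro a b hab
    simp only [hFdef]
    rw [Finset.sum_comm]
    have hper : ∀ r ∈ Finset.range R, ∑ k ∈ Finset.Ico a b, f r k ≤ (L:ℝ)/2 := by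
      intro r hr
      have hrR : r < R := Finset.mem_range.mp hr
      have h1 : ∑ k ∈ Finset.Ico a b, f r k ≤ ∑ k ∈ Finset.Ico a b, ((fun j => y r j / 2) k - (fun j => y r j / 2) (k+1)) := by
        refine Finset.sum_le_sum fun k _ => ?_
        have := hf_le r hrR k
        show f r k ≤ y r k / 2 - y r (k+1) / 2
        linarith
      rw [tele_sum (fun j => y r j / 2) a b hab] at h1
      have h2 := hub r (le_of_lt hrR) a
      have h3 := hlb r (le_of_lt hrR) b
      linarith
    calc ∑ r ∈ Finset.range R, ∑ k ∈ Finset.Ico a b, f r k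
        ≤ ∑ _r ∈ Finset.range R, (L:ℝ)/2 := Finset.sum_le_sum hper
    _ = (R:ℝ) * ((L:ℝ)/2) := by rw [Finset.sum_const, Finset.card_range]; simp [mul_comm]
  -- chain of happiness
  have hchain : ∀ a b : ℤ, a ≤ b → y R a - y R b ≤ (b:ℝ) - (a:ℝ) := by
    intro a
    refine Int.le_induction ?_ ?_
    · simp
    · intro b hb ih
      have h := abs_le.mp (hhappy b)
      push_cast
      push_cast at ih
      linarith [h.1]
  -- R is at least about L/2
  have hRL : (L:ℝ) ≤ 2*(R:ℝ)+1 := by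
    have h1 := hchain (-(R:ℤ)) ((R:ℤ)+1) (by omega)
    have h2 : y R (-(R:ℤ)) = L := (hsup R le_rfl).1 _ le_rfl
    have h3 : y R ((R:ℤ)+1) = 0 := (hsup R le_rfl).2 _ (by omega)
    rw [h2, h3] at h1
    push_cast at h1
    linarith
  -- numeric setup
  have hLr : (512:ℝ) ≤ (L:ℝ) := by exact_mod_cast hL
  set m : ℕ := L / 4 with hmdef
  set q : ℕ := L / 8 with hqdef
  have hm1 : (m:ℝ) ≤ (L:ℝ)/4 := by
    have h : 4 * m ≤ L := by omega
    have h' := (Nat.cast_le (α := ℝ)).mpr h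
    push_cast at h'
    linarith
  have hm2 : (L:ℝ)/4 - 1 ≤ (m:ℝ) := by
    have h : L < 4 * (m+1) := by omega
    have h' := (Nat.cast_lt (α := ℝ)).mpr h
    push_cast at h'
    linarith
  have hq1 : (q:ℝ) ≤ (L:ℝ)/8 := by
    have h : 8 * q ≤ L := by omega
    have h' := (Nat.cast_le (α := ℝ)).mpr h
    push_cast at h'
    linarith
  have hq2 : (L:ℝ)/8 - 1 ≤ (q:ℝ) := by
    have h : L < 8 * (q+1) := by omega
    have h' := (Nat.cast_lt (α := ℝ)).mpr h
    push_cast at h'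
    linarith
  have hR0 : (255:ℝ) ≤ (R:ℝ) := by linarith
  have hmR : (m:ℤ) ≤ (R:ℤ) := by
    have h : (m:ℝ) ≤ (R:ℝ) := by linarith
    exact_mod_cast h
  have hqm : (q:ℤ) ≤ (m:ℤ) := by
    have h : q ≤ m := by omega
    exact_mod_cast h
  have hLpos : (0:ℝ) < (L:ℝ) := by linarith
  by_cases hcase : (L:ℝ)/2 ≤ y R 1
  · -- mass flowed to the right
    have hedge : ∀ k ∈ Finset.Ico (0:ℤ) (q:ℤ), (L:ℝ)/8 * ((L:ℝ)/4) ≤ F k := by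
      intro k hk
      obtain ⟨hk0, hkq⟩ := Finset.mem_Ico.mp hk
      have hcons_k := hcons k (by omega)
      have h00 : ∑ i ∈ Finset.Ico (k+1) ((R:ℤ)+2), y 0 i = 0 :=
        Finset.sum_eq_zero fun i hi => by
          obtain ⟨hi1, _⟩ := Finset.mem_Ico.mp hi
          rw [h0, if_neg (by omega)]
      have hFk : F k = ∑ i ∈ Finset.Ico (k+1) ((R:ℤ)+2), y R i := by
        rw [← hcons_k, h00, sub_zero]
      have hsub : Finset.Ico (k+1) ((m:ℤ)+1) ⊆ Finset.Ico (k+1) ((R:ℤ)+2) :=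
        Finset.Ico_subset_Ico le_rfl (by omega)
      have h1 : ∑ i ∈ Finset.Ico (k+1) ((m:ℤ)+1), y R i
          ≤ ∑ i ∈ Finset.Ico (k+1) ((R:ℤ)+2), y R i :=
        Finset.sum_le_sum_of_subset_of_nonneg hsub fun i _ _ => hlb R le_rfl i
      have h2 : ∀ i ∈ Finset.Ico (k+1) ((m:ℤ)+1), (L:ℝ)/4 ≤ y R i := by
        intro i hi
        obtain ⟨hi1, hi2⟩ := Finset.mem_Ico.mp hi
        have hc := hchain 1 i (by omega)
        have him : (i:ℝ) ≤ (m:ℝ) := by exact_mod_cast (by omega : i ≤ (m:ℤ))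
        push_cast at hc
        linarith
      have h3 : ((Finset.Ico (k+1) ((m:ℤ)+1)).card : ℝ) * ((L:ℝ)/4)
          ≤ ∑ i ∈ Finset.Ico (k+1) ((m:ℤ)+1), y R i := by
        have h := Finset.card_nsmul_le_sum (Finset.Ico (k+1) ((m:ℤ)+1)) (y R) ((L:ℝ)/4) h2
        simpa [nsmul_eq_mul] using h
      have hcard : (L:ℝ)/8 ≤ ((Finset.Ico (k+1) ((m:ℤ)+1)).card : ℝ) := by
        rw [Int.card_Ico]
        have h6 : ((((m:ℤ)+1-(k+1)).toNat : ℤ) : ℝ) = ((m:ℝ) - (k:ℝ)) := by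
          rw [Int.toNat_of_nonneg (by omega)]
          push_cast
          ring
        have hk' : (k:ℝ) ≤ (q:ℝ) - 1 := by
          have h7 : k + 1 ≤ (q:ℤ) := hkq
          have h8 := (Int.cast_le (R := ℝ)).mpr h7
          push_cast at h8
          linarith
        push_cast at h6 ⊢
        rw [h6]
        linarith
      calc (L:ℝ)/8 * ((L:ℝ)/4)
          ≤ ((Finset.Ico (k+1) ((m:ℤ)+1)).card : ℝ) * ((L:ℝ)/4) :=
            mul_le_mul_of_nonneg_right hcard (by positivity)
      _ ≤ ∑ i ∈ Finset.Ico (k+1) ((m:ℤ)+1), y R i := h3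
      _ ≤ ∑ i ∈ Finset.Ico (k+1) ((R:ℤ)+2), y R i := h1
      _ = F k := hFk.symm
    have htot : (q:ℝ) * ((L:ℝ)/8 * ((L:ℝ)/4)) ≤ ∑ k ∈ Finset.Ico (0:ℤ) (q:ℤ), F k := by
      have h := Finset.card_nsmul_le_sum (Finset.Ico (0:ℤ) (q:ℤ)) F ((L:ℝ)/8 * ((L:ℝ)/4)) hedge
      have hc : (Finset.Ico (0:ℤ) (q:ℤ)).card = q := by
        rw [Int.card_Ico]
        simp
      rw [hc] at h
      simpa [nsmul_eq_mul] using h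
    have hup := hwork 0 (q:ℤ) (by positivity)
    have hq16 : (L:ℝ)/16 ≤ (q:ℝ) := by linarith
    have h7 : (L:ℝ)/16 * ((L:ℝ)/8 * ((L:ℝ)/4)) ≤ (q:ℝ) * ((L:ℝ)/8 * ((L:ℝ)/4)) :=
      mul_le_mul_of_nonneg_right hq16 (by positivity)
    have h8 : (L:ℝ)^3/512 ≤ (R:ℝ) * (L:ℝ)/2 := by
      have e : (L:ℝ)/16 * ((L:ℝ)/8 * ((L:ℝ)/4)) = (L:ℝ)^3/512 := by ring
      have e2 : (R:ℝ) * ((L:ℝ)/2) = (R:ℝ)*(L:ℝ)/2 := by ring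
      linarith [e ▸ e2 ▸ (le_trans h7 (le_trans htot hup))]
    have h10 : (R:ℝ)*(L:ℝ)/2 ≤ (R:ℝ)*(L:ℝ) := by
      have hpos : (0:ℝ) ≤ (R:ℝ)*(L:ℝ) := by positivity
      linarith
    have h11 : ((L:ℝ)^2/1024) * (L:ℝ) ≤ (R:ℝ) * (L:ℝ) := by
      have e3 : ((L:ℝ)^2/1024) * (L:ℝ) = (L:ℝ)^3/1024 := by ring
      rw [e3]
      have : (L:ℝ)^3/1024 ≤ (L:ℝ)^3/512 := by
        have : (0:ℝ) ≤ (L:ℝ)^3 := by positivity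
        linarith
      linarith
    have h12 : (L:ℝ)^2/1024 ≤ (R:ℝ) := le_of_mul_le_mul_right h11 hLpos
    linarith
  · -- mass drained from the left
    push_neg at hcase
    have hedge : ∀ k ∈ Finset.Ico (-(q:ℤ)) 1, (L:ℝ)/8 * ((L:ℝ)/8) ≤ F k := by
      intro k hk
      obtain ⟨hkq, hk1⟩ := Finset.mem_Ico.mp hk
      have hcons_k := hcons k (by omega)
      have hcons_R := hcons (-(R:ℤ)-1) (by omega)
      have hFR0 : F (-(R:ℤ)-1) = 0 :=
        Finset.sum_eq_zero fun r hr => hfA0 r (Finset.mem_range.mp hr)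
      have e : -(R:ℤ)-1+1 = -(R:ℤ) := by ring
      rw [e, hFR0] at hcons_R
      have hFk : F k = ∑ i ∈ Finset.Ico (-(R:ℤ)) (k+1), (y 0 i - y R i) := by
        have hs1 := sum_Ico_split (y R) (show -(R:ℤ) ≤ k+1 by omega) (show k+1 ≤ (R:ℤ)+2 by omega)
        have hs2 := sum_Ico_split (y 0) (show -(R:ℤ) ≤ k+1 by omega) (show k+1 ≤ (R:ℤ)+2 by omega)
        rw [Finset.sum_sub_distrib]
        linarith [hcons_k]
      have hsub : Finset.Ico (-(m:ℤ)) (k+1) ⊆ Finset.Ico (-(R:ℤ)) (k+1) :=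
        Finset.Ico_subset_Ico (by omega) le_rfl
      have h1 : ∑ i ∈ Finset.Ico (-(m:ℤ)) (k+1), (y 0 i - y R i)
          ≤ ∑ i ∈ Finset.Ico (-(R:ℤ)) (k+1), (y 0 i - y R i) := by
        refine Finset.sum_le_sum_of_subset_of_nonneg hsub fun i hi _ => ?_
        obtain ⟨_, hi2⟩ := Finset.mem_Ico.mp hi
        have hy0 : y 0 i = L := by rw [h0, if_pos (by omega)]
        rw [hy0]
        linarith [hub R le_rfl i]
      have h2 : ∀ i ∈ Finset.Ico (-(m:ℤ)) (k+1), (L:ℝ)/8 ≤ y 0 i - y R i := by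
        intro i hi
        obtain ⟨hi1, hi2⟩ := Finset.mem_Ico.mp hi
        have hy0 : y 0 i = L := by rw [h0, if_pos (by omega)]
        have hc := hchain i 1 (by omega)
        have hir : -((m:ℝ)) ≤ (i:ℝ) := by exact_mod_cast hi1
        push_cast at hc
        rw [hy0]
        linarith
      have h3 : ((Finset.Ico (-(m:ℤ)) (k+1)).card : ℝ) * ((L:ℝ)/8)
          ≤ ∑ i ∈ Finset.Ico (-(m:ℤ)) (k+1), (y 0 i - y R i) := by
        have h := Finset.card_nsmul_le_sum (Finset.Ico (-(m:ℤ)) (k+1)) (fun i => y 0 i - y R i) ((L:ℝ)/8) h2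
        simpa [nsmul_eq_mul] using h
      have hcard : (L:ℝ)/8 ≤ ((Finset.Ico (-(m:ℤ)) (k+1)).card : ℝ) := by
        rw [Int.card_Ico]
        have h6 : (((k+1-(-(m:ℤ))).toNat : ℤ) : ℝ) = ((k:ℝ) + 1 + (m:ℝ)) := by
          rw [Int.toNat_of_nonneg (by omega)]
          push_cast
          ring
        have hk' : -((q:ℝ)) ≤ (k:ℝ) := by
          have h8 := (Int.cast_le (R := ℝ)).mpr hkq
          push_cast at h8
          linarith
        push_cast at h6 ⊢
        rw [h6]
        linarith
      calc (L:ℝ)/8 * ((L:ℝ)/8)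
          ≤ ((Finset.Ico (-(m:ℤ)) (k+1)).card : ℝ) * ((L:ℝ)/8) :=
            mul_le_mul_of_nonneg_right hcard (by positivity)
      _ ≤ ∑ i ∈ Finset.Ico (-(m:ℤ)) (k+1), (y 0 i - y R i) := h3
      _ ≤ ∑ i ∈ Finset.Ico (-(R:ℤ)) (k+1), (y 0 i - y R i) := h1
      _ = F k := hFk.symm
    have htot : ((q:ℝ)+1) * ((L:ℝ)/8 * ((L:ℝ)/8)) ≤ ∑ k ∈ Finset.Ico (-(q:ℤ)) 1, F k := by
      have h := Finset.card_nsmul_le_sum (Finset.Ico (-(q:ℤ)) 1) F ((L:ℝ)/8 * ((L:ℝ)/8)) hedge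
      have hc : ((Finset.Ico (-(q:ℤ)) 1).card : ℝ) = (q:ℝ) + 1 := by
        rw [Int.card_Ico]
        have h6 : (((1-(-(q:ℤ))).toNat : ℤ) : ℝ) = ((q:ℝ) + 1) := by
          rw [Int.toNat_of_nonneg (by omega)]
          push_cast
          ring
        push_cast at h6 ⊢
        linarith
      rw [nsmul_eq_mul, hc] at h
      exact h
    have hup := hwork (-(q:ℤ)) 1 (by omega)
    have hq16 : (L:ℝ)/16 ≤ (q:ℝ) + 1 := by linarith
    have h7 : (L:ℝ)/16 * ((L:ℝ)/8 * ((L:ℝ)/8)) ≤ ((q:ℝ)+1) * ((L:ℝ)/8 * ((L:ℝ)/8)) :=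
      mul_le_mul_of_nonneg_right hq16 (by positivity)
    have h8 : (L:ℝ)^3/1024 ≤ (R:ℝ) * (L:ℝ)/2 := by
      have e : (L:ℝ)/16 * ((L:ℝ)/8 * ((L:ℝ)/8)) = (L:ℝ)^3/1024 := by ring
      have e2 : (R:ℝ) * ((L:ℝ)/2) = (R:ℝ)*(L:ℝ)/2 := by ring
      linarith [e ▸ e2 ▸ (le_trans h7 (le_trans htot hup))]
    have h10 : (R:ℝ)*(L:ℝ)/2 ≤ (R:ℝ)*(L:ℝ) := by
      have hpos : (0:ℝ) ≤ (R:ℝ)*(L:ℝ) := by positivity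
      linarith
    have h11 : ((L:ℝ)^2/1024) * (L:ℝ) ≤ (R:ℝ) * (L:ℝ) := by
      have e3 : ((L:ℝ)^2/1024) * (L:ℝ) = (L:ℝ)^3/1024 := by ring
      rw [e3]
      linarith
    have h12 : (L:ℝ)^2/1024 ≤ (R:ℝ) := le_of_mul_le_mul_right h11 hLpos
    linarith
end

section
/- Careful algorithms need exponential time: consider the graph consisting of two complete (d−1)-ary trees of depth L/4 rooted at u and v, joined by the edge {u,v}, with all nodes of the u-tree having load 0 and all nodes of the v-tree having load L. In any solution (y,f) with |y(a)−y(b)| ≤ 1 on every edge and load conservation, the flow across the edge {u,v} satisfies |f(v,u)| ≥ d^{Ω(L)}. Consequently, any algorithm that changes each edge flow by at most poly(L) per round needs d^{Ω(L)} rounds. -/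
/-- Vertices of the two-tree instance: a side (`false` = the `u`-tree with load
`0`, `true` = the `v`-tree with load `L`) together with the path from the root,
a list of child indices of length at most `D` (so every internal node has `c`
children and the trees have depth `D`). -/
abbrev CarefulVert (c D : ℕ) := Bool × Σ k : Fin (D + 1), List.Vector (Fin c) k

/-- The graph of Theorem 3 (careful algorithms): two complete `c`-ary trees of
depth `D` (parent/child edges extend the root path by one label), whose roots
(the two nodes with empty root path) are joined by an edge. -/
def carefulGraph (c D : ℕ) : SimpleGraph (CarefulVert c D) :=
  SimpleGraph.fromRel (fun p q =>
    (p.1 = q.1 ∧ ∃ a : Fin c, (q.2.2.toList = a :: p.2.2.toList))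
    ∨ (p.2.2.toList = [] ∧ q.2.2.toList = [] ∧ p.1 ≠ q.1))

/-- The root of the side `b` tree. -/
def carefulRoot (c D : ℕ) (b : Bool) : CarefulVert c D :=
  (b, ⟨⟨0, Nat.succ_pos D⟩, List.Vector.nil⟩)

namespace CarefulAux

open Finset

variable {c D : ℕ}

/-- vertices on side `b` -/
def side (c D : ℕ) (b : Bool) : Finset (CarefulVert c D) :=
  Finset.univ.filter (fun w => w.1 = b)

lemma eq_root_of_nil (w : CarefulVert c D) (h : w.2.2.toList = []) :
    w = carefulRoot c D w.1 := by
  obtain ⟨b, k, l, hl⟩ := w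
  simp only [List.Vector.toList] at h
  subst h
  have hk : k = ⟨0, Nat.succ_pos D⟩ := Fin.ext (by simpa using hl.symm)
  subst hk
  rfl

lemma adj_middle : (carefulGraph c D).Adj (carefulRoot c D true) (carefulRoot c D false) := by
  rw [carefulGraph, SimpleGraph.fromRel_adj]
  refine ⟨by simp [carefulRoot], Or.inl ?_⟩
  simp [carefulRoot]

lemma roots_of_cross_adj {u w : CarefulVert c D} (h : (carefulGraph c D).Adj u w)
    (hne : u.1 ≠ w.1) : u = carefulRoot c D u.1 ∧ w = carefulRoot c D w.1 := by
  rw [carefulGraph, SimpleGraph.fromRel_adj] at h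
  rcases h.2 with h' | h'
  · rcases h' with ⟨h1, _⟩ | ⟨h1, h2, _⟩
    · exact absurd h1 hne
    · exact ⟨eq_root_of_nil _ h1, eq_root_of_nil _ h2⟩
  · rcases h' with ⟨h1, _⟩ | ⟨h1, h2, _⟩
    · exact absurd h1.symm hne
    · exact ⟨eq_root_of_nil _ h2, eq_root_of_nil _ h1⟩

lemma adj_parent (b : Bool) (a : Fin c) (t : List (Fin c)) (hs : t.length + 1 < D + 1) :
    (carefulGraph c D).Adj
      (b, ⟨⟨t.length, by omega⟩, ⟨t, rfl⟩⟩)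
      (b, ⟨⟨t.length + 1, hs⟩, ⟨a :: t, rfl⟩⟩) := by
  rw [carefulGraph, SimpleGraph.fromRel_adj]
  constructor
  · intro h
    have := congrArg (fun w => (w.2.1 : ℕ)) h
    simp at this
  · exact Or.inl (Or.inl ⟨rfl, ⟨a, rfl⟩⟩)

/-- depth bound from happiness along root paths -/
lemma y_depth (y : CarefulVert c D → ℝ)
    (hhappy : ∀ u v, (carefulGraph c D).Adj u v → |y u - y v| ≤ 1)
    (b : Bool) :
    ∀ (l : List (Fin c)) (hl : l.length < D + 1),
      |y (b, ⟨⟨l.length, hl⟩, ⟨l, rfl⟩⟩) - y (carefulRoot c D b)| ≤ l.length := by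
  intro l
  induction l with
  | nil =>
    intro hl
    have h : (b, (⟨⟨List.length [], hl⟩, ⟨[], rfl⟩⟩ : Σ k : Fin (D+1),
        List.Vector (Fin c) k)) = carefulRoot c D b := rfl
    rw [h]
    simp
  | cons a t ih =>
    intro hl
    have ht : t.length < D + 1 := by simpa using Nat.lt_of_succ_lt hl
    have hadj := adj_parent (D := D) b a t (by simpa using hl)
    have h1 := hhappy _ _ hadj.symm
    have h2 := ih ht
    calc |y (b, ⟨⟨(a :: t).length, hl⟩, ⟨a :: t, rfl⟩⟩) - y (carefulRoot c D b)|
        ≤ |y (b, ⟨⟨(a :: t).length, hl⟩, ⟨a :: t, rfl⟩⟩)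
            - y (b, ⟨⟨t.length, by omega⟩, ⟨t, rfl⟩⟩)|
          + |y (b, ⟨⟨t.length, by omega⟩, ⟨t, rfl⟩⟩) - y (carefulRoot c D b)| :=
          abs_sub_le _ _ _
      _ ≤ 1 + t.length := by
          refine add_le_add ?_ h2
          simpa using h1
      _ = ((a :: t).length : ℝ) := by push_cast [List.length_cons]; ring

/-- every side-`b` vertex is within distance `D` (in `y`) from the root -/
lemma y_depth' (y : CarefulVert c D → ℝ)
    (hhappy : ∀ u v, (carefulGraph c D).Adj u v → |y u - y v| ≤ 1)
    (w : CarefulVert c D) :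
    |y w - y (carefulRoot c D w.1)| ≤ (w.2.1 : ℕ) := by
  obtain ⟨b, k, l, hl⟩ := w
  have hk : l.length < D + 1 := hl ▸ k.isLt
  have hfk : k = ⟨l.length, hk⟩ := Fin.ext (by simp [hl])
  subst hfk
  exact y_depth y hhappy b l hk

lemma sum_inflow (f : CarefulVert c D → CarefulVert c D → ℝ)
    (hanti : ∀ u v, f u v = - f v u)
    (hsupp : ∀ u v, ¬ (carefulGraph c D).Adj u v → f u v = 0) (b : Bool) :
    ∑ w ∈ side c D b, ∑ u, f u w = f (carefulRoot c D (!b)) (carefulRoot c D b) := by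
  classical
  have hsplit : ∀ w, (∑ u, f u w)
      = ∑ u ∈ side c D b, f u w + ∑ u ∈ (side c D b)ᶜ, f u w := by
    intro w
    rw [Finset.sum_add_sum_compl]
  simp_rw [hsplit, Finset.sum_add_distrib]
  have h1 : ∑ w ∈ side c D b, ∑ u ∈ side c D b, f u w = 0 := by
    have hneg : ∑ w ∈ side c D b, ∑ u ∈ side c D b, f u w
        = - ∑ w ∈ side c D b, ∑ u ∈ side c D b, f u w := by
      calc ∑ w ∈ side c D b, ∑ u ∈ side c D b, f u w
          = ∑ u ∈ side c D b, ∑ w ∈ side c D b, f u w := Finset.sum_comm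
        _ = ∑ u ∈ side c D b, ∑ w ∈ side c D b, -(f w u) :=
            Finset.sum_congr rfl fun u _ => Finset.sum_congr rfl fun w _ => hanti u w
        _ = - ∑ w ∈ side c D b, ∑ u ∈ side c D b, f u w := by
            simp
    linarith
  rw [h1, zero_add]
  have h2 : ∀ w ∈ side c D b, ∑ u ∈ (side c D b)ᶜ, f u w
      = if w = carefulRoot c D b then f (carefulRoot c D (!b)) (carefulRoot c D b)
        else 0 := by
    intro w hw
    have hwb : w.1 = b := by simpa [side] using hw
    by_cases hwr : w = carefulRoot c D b
    · subst hwr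
      rw [if_pos rfl]
      rw [Finset.sum_eq_single (carefulRoot c D (!b))]
      · intro u hu hune
        by_cases hadj : (carefulGraph c D).Adj u (carefulRoot c D b)
        · have hu1 : u.1 ≠ b := by
            simp only [side, Finset.mem_compl, Finset.mem_filter, Finset.mem_univ,
              true_and] at hu
            exact hu
          have hroot := (roots_of_cross_adj hadj (by exact hu1)).1
          have hub : u.1 = !b := by cases b <;> simpa using hu1
          rw [hub] at hroot
          exact absurd hroot hune
        · exact hsupp _ _ hadj
      · intro hnm
        exfalso
        apply hnm
        simp only [Finset.mem_compl, side, Finset.mem_filter, Finset.mem_univ,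
          true_and, carefulRoot]
        cases b <;> simp
    · rw [if_neg hwr]
      apply Finset.sum_eq_zero
      intro u hu
      by_cases hadj : (carefulGraph c D).Adj u w
      · exfalso
        have hu1 : u.1 ≠ b := by
          simp only [side, Finset.mem_compl, Finset.mem_filter, Finset.mem_univ,
            true_and] at hu
          exact hu
        have := (roots_of_cross_adj hadj (by rw [hwb]; exact hu1)).2
        rw [hwb] at this
        exact hwr this
      · exact hsupp _ _ hadj
  rw [Finset.sum_congr rfl h2, Finset.sum_ite_eq' (side c D b) (carefulRoot c D b),
    if_pos (by simp [side, carefulRoot])]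

lemma sum_side_ge (g : CarefulVert c D → ℝ) (b : Bool) (j : ℕ) (hj : j < D + 1)
    (h0 : ∀ w : CarefulVert c D, w.1 = b → 0 ≤ g w)
    (h1 : ∀ w : CarefulVert c D, w.1 = b → (w.2.1 : ℕ) = j → 1 ≤ g w) :
    (c : ℝ) ^ j ≤ ∑ w ∈ side c D b, g w := by
  classical
  set emb : List.Vector (Fin c) j → CarefulVert c D :=
    fun t => (b, ⟨⟨j, hj⟩, t⟩) with hemb
  have hinj : Function.Injective emb := by
    intro t1 t2 h
    simpa [hemb, Prod.ext_iff, Sigma.ext_iff] using h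
  have hsub : (Finset.univ.image emb) ⊆ side c D b := by
    intro w hw
    simp only [Finset.mem_image] at hw
    obtain ⟨t, _, rfl⟩ := hw
    simp [side, hemb]
  calc (c : ℝ) ^ j = (Fintype.card (List.Vector (Fin c) j) : ℝ) := by
        simp [card_vector]
    _ = ∑ _t : List.Vector (Fin c) j, (1 : ℝ) := by simp
    _ ≤ ∑ t : List.Vector (Fin c) j, g (emb t) := by
        apply Finset.sum_le_sum
        intro t _
        exact h1 (emb t) rfl rfl
    _ = ∑ w ∈ Finset.univ.image emb, g w := by
        rw [Finset.sum_image (by intro a _ b _ h; exact hinj h)]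
    _ ≤ ∑ w ∈ side c D b, g w := by
        apply Finset.sum_le_sum_of_subset_of_nonneg hsub
        intro w hw _
        exact h0 w (by simpa [side] using hw)




lemma main (c D L : ℕ) (hc : 2 ≤ c) (hD : 1 ≤ D) (hLD : 4 * D = L)
    (y : CarefulVert c D → ℝ) (f : CarefulVert c D → CarefulVert c D → ℝ)
    (hy0 : ∀ w, 0 ≤ y w)
    (hanti : ∀ u v, f u v = - f v u)
    (hsupp : ∀ u v, ¬ (carefulGraph c D).Adj u v → f u v = 0)
    (hcons : ∀ w, y w = (if w.1 then (L : ℝ) else 0) + ∑ u, f u w)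
    (hhappy : ∀ u v, (carefulGraph c D).Adj u v → |y u - y v| ≤ 1) :
    ((c : ℕ) : ℝ) ^ (D - 1) ≤ f (carefulRoot c D true) (carefulRoot c D false) := by
  classical
  have hA : ∑ w ∈ side c D false, y w
      = f (carefulRoot c D true) (carefulRoot c D false) := by
    have hin := sum_inflow f hanti hsupp false
    calc ∑ w ∈ side c D false, y w
        = ∑ w ∈ side c D false, ∑ u, f u w := by
          refine Finset.sum_congr rfl fun w hw => ?_
          have hwb : w.1 = false := by simpa [side] using hw
          rw [hcons w, hwb]
          simp
      _ = f (carefulRoot c D true) (carefulRoot c D false) := hin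
  have hB : ∑ w ∈ side c D true, ((L : ℝ) - y w)
      = f (carefulRoot c D true) (carefulRoot c D false) := by
    have hin := sum_inflow f hanti hsupp true
    have hsumy : ∑ w ∈ side c D true, y w
        = ∑ w ∈ side c D true, (L : ℝ)
          - f (carefulRoot c D true) (carefulRoot c D false) := by
      calc ∑ w ∈ side c D true, y w
          = ∑ w ∈ side c D true, ((L : ℝ) + ∑ u, f u w) := by
            refine Finset.sum_congr rfl fun w hw => ?_
            have hwb : w.1 = true := by simpa [side] using hw
            rw [hcons w, hwb]
            simp
        _ = ∑ w ∈ side c D true, (L : ℝ) + ∑ w ∈ side c D true, ∑ u, f u w :=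
            Finset.sum_add_distrib
        _ = _ := by
            rw [hin]
            simp only [Bool.not_true]
            rw [hanti (carefulRoot c D false) (carefulRoot c D true)]
            ring
    rw [Finset.sum_sub_distrib, hsumy]
    ring
  by_cases hcase : (D : ℝ) ≤ y (carefulRoot c D false)
  · rw [← hA]
    apply sum_side_ge y false (D - 1) (by omega)
    · intro w _
      exact hy0 w
    · intro w hwb hdep
      have hdpt := y_depth' y hhappy w
      rw [hwb, hdep] at hdpt
      have habs := (abs_le.mp hdpt).1
      have hcast : ((D : ℝ) - ((D - 1 : ℕ) : ℝ)) = 1 := by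
        push_cast [Nat.cast_sub hD]
        ring
      linarith
  · push_neg at hcase
    have hmid := hhappy _ _ (adj_middle (c := c) (D := D))
    have hvt : y (carefulRoot c D true) ≤ y (carefulRoot c D false) + 1 := by
      have := (abs_le.mp hmid).2
      linarith
    have hL4 : (L : ℝ) = 4 * (D : ℝ) := by
      rw [← hLD]
      push_cast
      ring
    have hD1 : (1 : ℝ) ≤ (D : ℝ) := by exact_mod_cast hD
    have hkey : ∀ w : CarefulVert c D, w.1 = true → 1 ≤ (L : ℝ) - y w := by
      intro w hwb
      have hdpt := y_depth' y hhappy w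
      rw [hwb] at hdpt
      have hw2 : ((w.2.1 : ℕ) : ℝ) ≤ (D : ℝ) := by
        exact_mod_cast Nat.le_of_lt_succ w.2.1.isLt
      have := (abs_le.mp hdpt).2
      linarith
    rw [← hB]
    apply sum_side_ge _ true (D - 1) (by omega)
    · intro w hwb
      linarith [hkey w hwb]
    · intro w hwb _
      exact hkey w hwb

end CarefulAux

open CarefulAux

/-- Careful algorithms need exponential time: on the two-tree instance with
`c = d − 1` children per node and depth `L/4`, input load `0` on the `u`-tree
and `L` on the `v`-tree, every valid solution `(y, f)` (nonnegative loads,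
antisymmetric flow supported on edges, load conservation, all edges happy) must
route `(d−1)^{L/4−1} = d^{Ω(L)}` units of flow across the middle edge; hence
any algorithm changing each edge flow by at most `P` per round needs at least
`(d−1)^{L/4−1}/P` rounds to produce it. -/
theorem stmt9 (d L : ℕ) (hd : 3 ≤ d) (hL : 4 ≤ L) (hdvd : 4 ∣ L)
    (y : CarefulVert (d - 1) (L / 4) → ℝ)
    (f : CarefulVert (d - 1) (L / 4) → CarefulVert (d - 1) (L / 4) → ℝ)
    (hy0 : ∀ w, 0 ≤ y w)
    (hanti : ∀ u v, f u v = - f v u)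
    (hsupp : ∀ u v, ¬ (carefulGraph (d - 1) (L / 4)).Adj u v → f u v = 0)
    (hcons : ∀ w, y w = (if w.1 then (L : ℝ) else 0) + ∑ u, f u w)
    (hhappy : ∀ u v, (carefulGraph (d - 1) (L / 4)).Adj u v → |y u - y v| ≤ 1) :
    ((d : ℝ) - 1) ^ (L / 4 - 1)
        ≤ |f (carefulRoot (d - 1) (L / 4) true) (carefulRoot (d - 1) (L / 4) false)| ∧
    (∀ (P : ℝ) (R : ℕ) (fs : ℕ → ℝ), fs 0 = 0 →
      (∀ r < R, |fs (r + 1) - fs r| ≤ P) →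
      fs R = f (carefulRoot (d - 1) (L / 4) true) (carefulRoot (d - 1) (L / 4) false) →
      ((d : ℝ) - 1) ^ (L / 4 - 1) ≤ P * R) := by
  have hdc : ((d : ℝ) - 1) = (((d - 1 : ℕ)) : ℝ) := by
    push_cast [Nat.cast_sub (by omega : 1 ≤ d)]
    ring
  rw [hdc]
  have hmain := main (d - 1) (L / 4) L (by omega)
    (by omega) (Nat.mul_div_cancel' hdvd) y f hy0 hanti hsupp hcons hhappy
  have habs : (((d - 1 : ℕ)) : ℝ) ^ (L / 4 - 1)
      ≤ |f (carefulRoot (d - 1) (L / 4) true) (carefulRoot (d - 1) (L / 4) false)| :=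
    le_trans hmain (le_abs_self _)
  refine ⟨habs, ?_⟩
  intro P R fs hfs0 hstep hfsR
  have htel : ∀ n, n ≤ R → |fs n| ≤ P * n := by
    intro n
    induction n with
    | zero =>
      intro _
      simp [hfs0]
    | succ k ih =>
      intro hk
      have h1 := hstep k (by omega)
      have h2 := ih (by omega)
      calc |fs (k + 1)| ≤ |fs (k + 1) - fs k| + |fs k| := by
            simpa using abs_add_le (fs (k + 1) - fs k) (fs k)
        _ ≤ P + P * k := add_le_add h1 h2
        _ = P * ((k : ℝ) + 1) := by ring
        _ = P * ((k + 1 : ℕ) : ℝ) := by push_cast; ring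
  have hend := htel R le_rfl
  rw [hfsR] at hend
  exact le_trans habs hend
end

section
/- A ⟦−1,1⟧-stable token configuration on a path yields a locally balanced load vector: if the configuration is k-stable for all k ∈ {−1,0,1} (each token at slot (v,i) with i > 1 has a token below it at (v+k, i−1)), then setting y(v) = number of tokens at node v gives |y(v) − y(v+1)| ≤ 1 for all adjacent nodes. -/
/-- A token configuration on the path (given by per-node token counts `y`, the
tokens at node `v` occupying slots `(v,1),…,(v,y v)`) is `k`-stable if every
token at slot `(v,i)` with `i > 1` has a token at `(v+k, i−1)`. -/
def kStable (y : ℤ → ℕ) (k : ℤ) : Prop :=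
  ∀ (v : ℤ) (i : ℕ), 2 ≤ i → i ≤ y v → i - 1 ≤ y (v + k)

/-- A `⟦−1,1⟧`-stable token configuration on a path yields a locally balanced
load vector: adjacent token counts differ by at most `1`. -/
theorem stmt12 (L : ℕ) (y : ℤ → ℕ) (hy : ∀ v, y v ≤ L)
    (hstab : ∀ k : ℤ, k ∈ ({-1, 0, 1} : Set ℤ) → kStable y k) :
    ∀ v : ℤ, |(y v : ℤ) - (y (v + 1) : ℤ)| ≤ 1 := by
  intro v
  have h1 : kStable y 1 := hstab 1 (by simp)
  have h2 : kStable y (-1) := hstab (-1) (by simp)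
  have a : y v ≤ y (v + 1) + 1 := by
    by_cases h : 2 ≤ y v
    · have := h1 v (y v) h le_rfl
      omega
    · omega
  have b : y (v + 1) ≤ y v + 1 := by
    by_cases h : 2 ≤ y (v + 1)
    · have := h2 (v + 1) (y (v + 1)) h le_rfl
      simp only [add_neg_cancel_right] at this
      omega
    · omega
  rw [abs_le]
  omega
end

section
/- Push lemma: for integers ℓ and k, if a token configuration on the infinite directed path is k-stable, then it is still k-stable after an ℓ-push, where an ℓ-push redistributes the tokens on each ℓ-diagonal S(v,ℓ) = ((v−ℓ,1), (v−2ℓ,2), ..., (v−Lℓ,L)) so that if the diagonal contains m tokens, its first m slots are occupied and the rest are empty. Moreover, after an ℓ-push the configuration is ℓ-stable. -/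
open scoped Classical

/-- All occupied slots `(v,i)` have level `1 ≤ i ≤ L`. -/
def SlotsOK (L : ℕ) (c : Set (ℤ × ℕ)) : Prop :=
  ∀ p ∈ c, 1 ≤ p.2 ∧ p.2 ≤ L

/-- A configuration is `k`-stable if every token at slot `(v,i)` with `i ≥ 2`
has a token at slot `(v+k, i−1)`. -/
def KStable (c : Set (ℤ × ℕ)) (k : ℤ) : Prop :=
  ∀ (v : ℤ) (i : ℕ), (v, i) ∈ c → 2 ≤ i → (v + k, i - 1) ∈ c

/-- Number of tokens on the `ℓ`-diagonal `S(v,ℓ) = ((v−ℓ,1), …, (v−Lℓ,L))`. -/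
noncomputable def diagCount (L : ℕ) (c : Set (ℤ × ℕ)) (ℓ v : ℤ) : ℕ :=
  ((Finset.Icc 1 L).filter (fun (j : ℕ) => ((v - (j : ℤ) * ℓ, j) : ℤ × ℕ) ∈ c)).card

/-- The configuration after an `ℓ`-push: on each `ℓ`-diagonal containing `m`
tokens, exactly the first `m` slots of the diagonal are occupied. -/
def pushed (L : ℕ) (c : Set (ℤ × ℕ)) (ℓ : ℤ) : Set (ℤ × ℕ) :=
  {p | 1 ≤ p.2 ∧ p.2 ≤ L ∧ p.2 ≤ diagCount L c ℓ (p.1 + (p.2 : ℤ) * ℓ)}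


lemma key_s13 (L : ℕ) (c : Set (ℤ × ℕ)) (ℓ k : ℤ) (hk : KStable c k) (w : ℤ) :
    diagCount L c ℓ w ≤ diagCount L c ℓ (w + k - ℓ) + 1 := by
  classical
  unfold diagCount
  set A := (Finset.Icc 1 L).filter (fun (j : ℕ) => ((w - (j : ℤ) * ℓ, j) : ℤ × ℕ) ∈ c) with hA
  set B := (Finset.Icc 1 L).filter
    (fun (j : ℕ) => ((w + k - ℓ - (j : ℤ) * ℓ, j) : ℤ × ℕ) ∈ c) with hB
  have h1 : A.card ≤ (A.filter (fun j => 2 ≤ j)).card + 1 := by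
    have : A ⊆ (A.filter (fun j => 2 ≤ j)) ∪ {1} := by
      intro j hj
      rcases le_or_gt 2 j with h | h
      · exact Finset.mem_union_left _ (Finset.mem_filter.2 ⟨hj, h⟩)
      · have : 1 ≤ j := (Finset.mem_Icc.1 (Finset.mem_filter.1 hj).1).1
        interval_cases j
        exact Finset.mem_union_right _ (Finset.mem_singleton.2 rfl)
    calc A.card ≤ ((A.filter (fun j => 2 ≤ j)) ∪ {1}).card := Finset.card_le_card this
      _ ≤ (A.filter (fun j => 2 ≤ j)).card + 1 :=
        (Finset.card_union_le _ _).trans (by simp)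
  have h2 : (A.filter (fun j => 2 ≤ j)).card ≤ B.card := by
    apply Finset.card_le_card_of_injOn (fun j => j - 1)
    · intro j hj
      obtain ⟨hjA, hj2⟩ := Finset.mem_filter.1 hj
      obtain ⟨hjI, hjc⟩ := Finset.mem_filter.1 hjA
      obtain ⟨hj1, hjL⟩ := Finset.mem_Icc.1 hjI
      have hc := hk _ _ hjc hj2
      refine Finset.mem_filter.2 ⟨Finset.mem_Icc.2 ⟨by dsimp only; omega, by dsimp only; omega⟩, ?_⟩
      have : ((j - 1 : ℕ) : ℤ) = (j : ℤ) - 1 := by omega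
      rw [this]
      have heq : w + k - ℓ - ((j : ℤ) - 1) * ℓ = w - (j : ℤ) * ℓ + k := by ring
      rw [heq]
      exact hc
    · intro a ha b hb hab
      simp only at hab
      have ha2 : 2 ≤ a := (Finset.mem_filter.1 ha).2
      have hb2 : 2 ≤ b := (Finset.mem_filter.1 hb).2
      omega
  omega

/-- Push lemma: an `ℓ`-push preserves `k`-stability for every `k`, and the
resulting configuration is moreover `ℓ`-stable. -/
theorem stmt13 (L : ℕ) (c : Set (ℤ × ℕ)) (ℓ k : ℤ)
    (hok : SlotsOK L c) (hk : KStable c k) :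
    KStable (pushed L c ℓ) k ∧ KStable (pushed L c ℓ) ℓ := by
  constructor
  · intro v i hvi hi2
    have hvi' : 1 ≤ i ∧ i ≤ L ∧ i ≤ diagCount L c ℓ (v + (i : ℤ) * ℓ) := hvi
    obtain ⟨h1, hL, hcnt⟩ := hvi'
    have hkey := key_s13 L c ℓ k hk (v + (i : ℤ) * ℓ)
    refine ⟨by omega, by omega, ?_⟩
    show i - 1 ≤ diagCount L c ℓ (v + k + ((i - 1 : ℕ) : ℤ) * ℓ)
    have heq : v + k + ((i - 1 : ℕ) : ℤ) * ℓ = v + (i : ℤ) * ℓ + k - ℓ := by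
      have : ((i - 1 : ℕ) : ℤ) = (i : ℤ) - 1 := by omega
      rw [this]; ring
    rw [heq]
    omega
  · intro v i hvi hi2
    have hvi' : 1 ≤ i ∧ i ≤ L ∧ i ≤ diagCount L c ℓ (v + (i : ℤ) * ℓ) := hvi
    obtain ⟨h1, hL, hcnt⟩ := hvi'
    refine ⟨by omega, by omega, ?_⟩
    show i - 1 ≤ diagCount L c ℓ (v + ℓ + ((i - 1 : ℕ) : ℤ) * ℓ)
    have heq : v + ℓ + ((i - 1 : ℕ) : ℤ) * ℓ = v + (i : ℤ) * ℓ := by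
      have : ((i - 1 : ℕ) : ℤ) = (i : ℤ) - 1 := by omega
      rw [this]; ring
    rw [heq]
    omega
end

section
/- Performing ℓ-pushes for each ℓ ∈ {−3,−2,−1,0,1,2,3} sequentially, in any order, on an initially 0-stable configuration on the infinite directed path yields a ⟦−3,3⟧-stable configuration, i.e., one that is k-stable for all k with |k| ≤ 3. -/
open scoped Classical

lemma pushed_gain (L : ℕ) (c : Set (ℤ × ℕ)) (ℓ : ℤ) :
    KStable (pushed L c ℓ) ℓ := by
  rintro v i ⟨h1, h2, h3⟩ hi
  have h3' : i ≤ diagCount L c ℓ (v + (i : ℤ) * ℓ) := h3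
  refine ⟨by omega, by omega, ?_⟩
  have : (v + ℓ) + ((i - 1 : ℕ) : ℤ) * ℓ = v + (i : ℤ) * ℓ := by
    have : ((i - 1 : ℕ) : ℤ) = (i : ℤ) - 1 := by omega
    rw [this]; ring
  rw [this]; omega

lemma pushed_preserve (L : ℕ) (c : Set (ℤ × ℕ)) (ℓ k : ℤ)
    (hk : KStable c k) : KStable (pushed L c ℓ) k := by
  rintro v i ⟨h1, h2, h3⟩ hi
  have h3' : i ≤ diagCount L c ℓ (v + (i : ℤ) * ℓ) := h3
  refine ⟨by omega, by omega, ?_⟩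
  set w := v + (i : ℤ) * ℓ with hw
  have hweq : (v + k) + ((i - 1 : ℕ) : ℤ) * ℓ = w + k - ℓ := by
    have : ((i - 1 : ℕ) : ℤ) = (i : ℤ) - 1 := by omega
    rw [this, hw]; ring
  rw [hweq]
  -- main counting argument
  set A := (Finset.Icc 1 L).filter (fun (j : ℕ) => ((w - (j : ℤ) * ℓ, j) : ℤ × ℕ) ∈ c)
  set B := (Finset.Icc 1 L).filter
    (fun (j : ℕ) => ((w + k - ℓ - (j : ℤ) * ℓ, j) : ℤ × ℕ) ∈ c)
  have hcard : (A.erase 1).card ≤ B.card := by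
    apply Finset.card_le_card_of_injOn (fun j => j - 1)
    · intro j hj
      have hj1 : j ≠ 1 := Finset.ne_of_mem_erase hj
      have hjA : j ∈ A := Finset.mem_of_mem_erase hj
      simp only [A, Finset.mem_filter, Finset.mem_Icc] at hjA
      obtain ⟨⟨hj1', hjL⟩, hjc⟩ := hjA
      have hj2 : 2 ≤ j := by omega
      have := hk _ _ hjc hj2
      simp only [B, Finset.mem_coe, Finset.mem_filter, Finset.mem_Icc]
      refine ⟨⟨by omega, by omega⟩, ?_⟩
      have hcast : (w + k - ℓ - ((j - 1 : ℕ) : ℤ) * ℓ) = w - (j : ℤ) * ℓ + k := by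
        have : ((j - 1 : ℕ) : ℤ) = (j : ℤ) - 1 := by omega
        rw [this]; ring
      rw [hcast]; exact this
    · intro a ha b hb hab
      simp only at hab
      have ha1 : a ≠ 1 := Finset.ne_of_mem_erase ha
      have hb1 : b ≠ 1 := Finset.ne_of_mem_erase hb
      have haA := Finset.mem_of_mem_erase ha
      have hbA := Finset.mem_of_mem_erase hb
      simp only [A, Finset.mem_filter, Finset.mem_Icc] at haA hbA
      omega
  have hA : i ≤ A.card := h3'
  have h4 : A.card - 1 ≤ (A.erase 1).card :=
    Finset.pred_card_le_card_erase (a := 1) (s := A)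
  show i - 1 ≤ B.card
  omega

/-- Performing `ℓ`-pushes for each `ℓ ∈ {−3,…,3}` sequentially, in any order,
starting from a `0`-stable configuration, yields a `⟦−3,3⟧`-stable
configuration. -/
theorem stmt14 (L : ℕ) (c : ℕ → Set (ℤ × ℕ)) (ord : Fin 7 → ℤ)
    (hord : ∀ k : ℤ, k ∈ Finset.Icc (-3 : ℤ) 3 → ∃ j : Fin 7, ord j = k)
    (h0 : SlotsOK L (c 0)) (hstab0 : KStable (c 0) 0)
    (hstep : ∀ j : Fin 7, c ((j : ℕ) + 1) = pushed L (c (j : ℕ)) (ord j)) :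
    ∀ k ∈ Finset.Icc (-3 : ℤ) 3, KStable (c 7) k := by
  have key : ∀ n : ℕ, n ≤ 7 → ∀ j : Fin 7, (j : ℕ) < n → KStable (c n) (ord j) := by
    intro n
    induction n with
    | zero => intro _ j hj; omega
    | succ m ih =>
      intro hm j hj
      have hm7 : m < 7 := by omega
      have hstepm := hstep ⟨m, hm7⟩
      simp only at hstepm
      rw [hstepm]
      by_cases hje : (j : ℕ) = m
      · have : j = ⟨m, hm7⟩ := Fin.ext hje
        rw [this]
        exact pushed_gain L (c m) (ord ⟨m, hm7⟩)
      · exact pushed_preserve L (c m) _ _ (ih (by omega) j (by omega))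
  intro k hk
  obtain ⟨j, hj⟩ := hord k hk
  rw [← hj]
  exact key 7 le_rfl j j.isLt
end

section
/- In the discrete cone-freezing algorithm, a frozen token is stable: if a token occupies slot (v,i) and every slot (u,j) with i − j ≥ dist(v,u) and (u,j) ≠ (v,i) is full, then in the final load vector y (number of tokens per node) every edge incident to configurations containing only stable tokens is happy; in particular, if every token is stable then |y(u) − y(v)| ≤ 1 for all edges {u,v}. -/
/-- Cone stability implies happiness: tokens at node `v` occupy slots
`(v,1),…,(v,y v)`; a token at `(v,i)` is stable if every slot `(u,j) ≠ (v,i)`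
of its downward cone (those with `i − j ≥ dist(v,u)`) is full. If every token
is stable, then the loads of adjacent nodes differ by at most `1`. -/
theorem stmt16 {V : Type*} (G : SimpleGraph V) (L : ℕ) (y : V → ℕ)
    (hy : ∀ v, y v ≤ L)
    (hstable : ∀ (v : V) (i : ℕ), 1 ≤ i → i ≤ y v →
      ∀ (u : V) (j : ℕ), 1 ≤ j → j ≤ L → (u, j) ≠ (v, i) →
        (j : ℤ) ≤ (i : ℤ) - (G.dist v u : ℤ) → j ≤ y u) :
    ∀ u v, G.Adj u v → |(y u : ℤ) - (y v : ℤ)| ≤ 1 := by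
  have key : ∀ a b, G.Adj a b → y a ≤ y b + 1 := by
    intro a b hab
    by_contra h
    push_neg at h
    have h2 : 2 ≤ y a := by omega
    have hdist : G.dist a b = 1 := SimpleGraph.dist_eq_one_iff_adj.mpr hab
    have hne : (b, y a - 1) ≠ (a, y a) := by
      have := hab.ne
      simp [Prod.ext_iff]
      intro hba; exact absurd hba.symm this
    have := hstable a (y a) (by omega) le_rfl b (y a - 1) (by omega)
      (by have := hy a; omega) hne (by rw [hdist]; push_cast [Nat.cast_sub (by omega : 1 ≤ y a)]; omega)
    omega
  intro u v huv
  have h1 := key u v huv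
  have h2 := key v u huv.symm
  rw [abs_le]
  constructor <;> [skip; skip] <;> push_cast <;> omega
end
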